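/- arXiv:2503.20773 — 3 statements merged into one kernel-verified Lean document; each statement's English description precedes it below -/
import Mathlib

section
/- Let $\bar{n}^1, \bar{n}^2 \in N_T^d$, and for $k = 1,2$ define the difference sequences $m^k_i = n^k_i - n^k_{i+1}$ for $1 \le i \le d-1$. Then the stabilizer containment $S_{\bar{n}^1} \subseteq S_{\bar{n}^2}$ holds if and only if for every $1 \le i \le d-1$ one has $m^1_i \le m^2_i$ and ($m^1_i = 0$ if and only if $m^2_i = 0$). -/
open Matrix Polynomial

noncomputable section

/-- `t = X⁻¹` in the Laurent series field `F = 𝔽_q((X))`. -/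
def tF (Fq : Type) [Field Fq] : LaurentSeries Fq := HahnSeries.single (-1 : ℤ) (1 : Fq)

/-- The embedding of the polynomial ring `𝔽_q[t]` into `F = 𝔽_q((X))`, sending the
polynomial variable to `t = X⁻¹`. -/
def polyToF (Fq : Type) [Field Fq] : Polynomial Fq →+* LaurentSeries Fq :=
  Polynomial.eval₂RingHom (HahnSeries.C) (tF Fq)

/-- The lattice `l_n̄ = t^{n₁}𝒪e₁ ⊕ ⋯ ⊕ t^{n_d}𝒪e_d` as an `𝒪`-submodule of `F^d`,
where `𝒪 = 𝔽_q[[X]]` acts on `F = 𝔽_q((X))` via the inclusion, and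
`t^{n} = HahnSeries.single (-n) 1`. -/
def lattM (Fq : Type) [Field Fq] {d : ℕ} (n : Fin d → ℤ) :
    Submodule (PowerSeries Fq) (Fin d → LaurentSeries Fq) :=
  Submodule.span (PowerSeries Fq)
    (Set.range fun i : Fin d =>
      (HahnSeries.single (-(n i)) (1 : Fq) : LaurentSeries Fq) •
        (Pi.single i (1 : LaurentSeries Fq) : Fin d → LaurentSeries Fq))

/-- The image `g L` of an `𝒪`-submodule `L ⊆ F^d` under a matrix `g ∈ M_d(F)`. -/
def actM (Fq : Type) [Field Fq] {d : ℕ} (g : Matrix (Fin d) (Fin d) (LaurentSeries Fq))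
    (L : Submodule (PowerSeries Fq) (Fin d → LaurentSeries Fq)) :
    Submodule (PowerSeries Fq) (Fin d → LaurentSeries Fq) :=
  L.map ((g.mulVecLin).restrictScalars (PowerSeries Fq))

/-- The image `a L` of an `𝒪`-submodule `L ⊆ F^d` under scalar multiplication by `a ∈ F`. -/
def scaleM (Fq : Type) [Field Fq] {d : ℕ} (a : LaurentSeries Fq)
    (L : Submodule (PowerSeries Fq) (Fin d → LaurentSeries Fq)) :
    Submodule (PowerSeries Fq) (Fin d → LaurentSeries Fq) :=
  L.map ((LinearMap.lsmul (LaurentSeries Fq) (Fin d → LaurentSeries Fq) a).restrictScalars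
    (PowerSeries Fq))

/-- The image in `M_d(F)` of a matrix over `𝔽_q[t]`. -/
def glToF (Fq : Type) [Field Fq] {d : ℕ} (γ : GL (Fin d) (Polynomial Fq)) :
    Matrix (Fin d) (Fin d) (LaurentSeries Fq) :=
  (γ : Matrix (Fin d) (Fin d) (Polynomial Fq)).map (polyToF Fq)

/-- The stabilizer `S_n̄ = {γ ∈ GL_d(𝔽_q[t]) : γ l_n̄ = l_n̄}`. -/
def Stab (Fq : Type) [Field Fq] {d : ℕ} (n : Fin d → ℤ) :
    Set (GL (Fin d) (Polynomial Fq)) :=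
  {γ | actM Fq (glToF Fq γ) (lattM Fq n) = lattM Fq n}

/-- `N_T^d`: integer tuples `n₁ ≥ n₂ ≥ ⋯ ≥ n_d = 0`. -/
def NT {d : ℕ} (n : Fin d → ℤ) : Prop :=
  (∀ i j : Fin d, i ≤ j → n j ≤ n i) ∧ ∀ i : Fin d, (i : ℕ) = d - 1 → n i = 0

/-- The difference sequence `m_i = n_i - n_{i+1}`. -/
def mdiff {d : ℕ} (n : Fin d → ℤ) (i : ℕ) (h : i + 1 < d) : ℤ :=
  n ⟨i, Nat.lt_of_succ_lt h⟩ - n ⟨i + 1, h⟩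

end

variable {Fq : Type} [Field Fq] {d : ℕ}

theorem coeff_polyToF (p : Polynomial Fq) (m : ℤ) :
    (polyToF Fq p).coeff m = if 0 ≤ -m then p.coeff (-m).toNat else 0 := by
  induction p using Polynomial.induction_on' with
  | add f g hf hg =>
    simp only [map_add, HahnSeries.coeff_add, hf, hg, Polynomial.coeff_add]
    split <;> simp
  | monomial k c =>
    have h1 : polyToF Fq (Polynomial.monomial k c) = HahnSeries.single (-(k:ℤ)) c := by
      show Polynomial.eval₂ _ _ _ = _
      rw [Polynomial.eval₂_monomial]
      show HahnSeries.C c * (tF Fq) ^ k = _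
      rw [tF, HahnSeries.single_pow]
      rw [HahnSeries.C_apply, HahnSeries.single_mul_single]
      simp
    rw [h1, HahnSeries.coeff_single, Polynomial.coeff_monomial]
    by_cases hm : m = -(k:ℤ)
    · subst hm
      simp
    · rw [if_neg hm]
      split
      · rw [if_neg]
        omega
      · rfl

theorem exists_shift_iff (s : LaurentSeries Fq) (c : ℤ) :
    (∃ a : PowerSeries Fq,
        s = HahnSeries.single c (1 : Fq) * HahnSeries.ofPowerSeries ℤ Fq a) ↔
      ∀ m : ℤ, m < c → s.coeff m = 0 := by
  constructor
  · rintro ⟨a, rfl⟩ m hm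
    have h1 : m = (m - c) + c := by ring
    rw [h1, HahnSeries.coeff_single_mul_add, one_mul]
    rw [show ((HahnSeries.ofPowerSeries ℤ Fq) a) = ((a : PowerSeries Fq) : LaurentSeries Fq) from rfl]
    rw [PowerSeries.coeff_coe, if_pos (show m - c < 0 by omega)]
  · intro h
    refine ⟨PowerSeries.mk fun k => s.coeff (c + k), ?_⟩
    ext m
    have h1 : m = (m - c) + c := by ring
    rw [h1, HahnSeries.coeff_single_mul_add, one_mul]
    rw [show ((HahnSeries.ofPowerSeries ℤ Fq) (PowerSeries.mk fun k => s.coeff (c + k)))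
      = (((PowerSeries.mk fun k => s.coeff (c + k)) : PowerSeries Fq) : LaurentSeries Fq) from rfl]
    rw [PowerSeries.coeff_coe]
    split
    · next hneg => exact h (m - c + c) (by omega)
    · rw [PowerSeries.coeff_mk]
      congr 1
      omega

theorem mem_lattM_iff (n : Fin d → ℤ) (v : Fin d → LaurentSeries Fq) :
    v ∈ lattM Fq n ↔ ∀ i : Fin d, ∀ m : ℤ, m < -(n i) → (v i).coeff m = 0 := by
  rw [lattM, Submodule.mem_span_range_iff_exists_fun]
  have key : ∀ c : Fin d → PowerSeries Fq, ∀ i : Fin d,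
      (∑ j, c j • ((HahnSeries.single (-(n j)) (1 : Fq) : LaurentSeries Fq) •
        (Pi.single j (1 : LaurentSeries Fq) : Fin d → LaurentSeries Fq))) i
      = HahnSeries.single (-(n i)) (1 : Fq) * HahnSeries.ofPowerSeries ℤ Fq (c i) := by
    intro c i
    rw [Finset.sum_apply]
    rw [Finset.sum_eq_single i]
    · simp only [Pi.smul_apply, Pi.single_eq_same, smul_eq_mul, mul_one]
      rw [Algebra.smul_def, LaurentSeries.coe_algebraMap, mul_comm]
    · intro j _ hj
      have hz : (Pi.single j (1 : LaurentSeries Fq) : Fin d → LaurentSeries Fq) i = 0 :=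
        Pi.single_eq_of_ne (Ne.symm hj) 1
      simp only [Pi.smul_apply, hz, smul_eq_mul, mul_zero]
      exact smul_zero (A := LaurentSeries Fq) (c j)
    · intro h
      exact absurd (Finset.mem_univ i) h
  constructor
  · rintro ⟨c, rfl⟩ i
    rw [key c i]
    exact fun m hm => (exists_shift_iff _ _).mp ⟨c i, rfl⟩ m hm
  · intro h
    choose a ha using fun i => (exists_shift_iff (v i) (-(n i))).mpr (h i)
    exact ⟨a, funext fun i => by rw [key a i, ← ha i]⟩

/-- degree condition: all coefficients above `c` vanish -/
def Dc (p : Polynomial Fq) (c : ℤ) : Prop := ∀ k : ℕ, c < (k : ℤ) → p.coeff k = 0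

theorem coeff_single_mul (x : LaurentSeries Fq) (b m : ℤ) :
    (HahnSeries.single b (1 : Fq) * x).coeff m = x.coeff (m - b) := by
  have h1 : m = (m - b) + b := by ring
  rw [h1, HahnSeries.coeff_single_mul_add, one_mul]
  congr 1
  ring

theorem forall_coeff_lt_iff (p : Polynomial Fq) (c : ℤ) :
    (∀ m : ℤ, m < c → (polyToF Fq p).coeff m = 0) ↔ Dc p (-c) := by
  constructor
  · intro h k hk
    have := h (-(k : ℤ)) (by omega)
    rw [coeff_polyToF, if_pos (by omega)] at this
    simpa using this
  · intro h m hm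
    rw [coeff_polyToF]
    split
    · exact h _ (by omega)
    · rfl

theorem actM_le_iff (n : Fin d → ℤ) (P : Matrix (Fin d) (Fin d) (Polynomial Fq)) :
    actM Fq (P.map (polyToF Fq)) (lattM Fq n) ≤ lattM Fq n ↔
      ∀ i j, Dc (P i j) (n i - n j) := by
  have hspan : actM Fq (P.map (polyToF Fq)) (lattM Fq n) =
      Submodule.span (PowerSeries Fq) (Set.range fun j : Fin d =>
        (fun i => HahnSeries.single (-(n j)) (1 : Fq) * polyToF Fq (P i j) :
          Fin d → LaurentSeries Fq)) := by
    rw [actM, lattM, Submodule.map_span, ← Set.range_comp]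
    refine congrArg _ (congrArg Set.range (funext fun j => ?_))
    have h1 : (HahnSeries.single (-(n j)) (1 : Fq) : LaurentSeries Fq) •
        (Pi.single j (1 : LaurentSeries Fq) : Fin d → LaurentSeries Fq)
        = Pi.single j (HahnSeries.single (-(n j)) (1 : Fq) : LaurentSeries Fq) := by
      funext k
      by_cases hk : k = j
      · subst hk
        rw [Pi.smul_apply, Pi.single_eq_same, Pi.single_eq_same, smul_eq_mul, mul_one]
      · rw [Pi.smul_apply, Pi.single_eq_of_ne hk, Pi.single_eq_of_ne hk, smul_eq_mul, mul_zero]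
    show (P.map (polyToF Fq)).mulVec
        ((HahnSeries.single (-(n j)) (1 : Fq) : LaurentSeries Fq) •
          (Pi.single j (1 : LaurentSeries Fq) : Fin d → LaurentSeries Fq)) = _
    rw [h1, Matrix.mulVec_single]
    funext i
    rw [Pi.smul_apply, Matrix.col_apply, Matrix.map_apply, op_smul_eq_mul, mul_comm]
  rw [hspan, Submodule.span_le, Set.range_subset_iff]
  constructor
  · intro h i j
    have h2 := (mem_lattM_iff n _).mp (h j) i
    have h3 : ∀ m : ℤ, m < n j - n i → (polyToF Fq (P i j)).coeff m = 0 := by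
      intro m hm
      have := h2 (m - n j) (by omega)
      rw [coeff_single_mul] at this
      rwa [show m - n j - -n j = m by ring] at this
    have := (forall_coeff_lt_iff (P i j) (n j - n i)).mp h3
    rwa [neg_sub] at this
  · intro h j
    rw [SetLike.mem_coe, mem_lattM_iff]
    intro i m hm
    rw [coeff_single_mul]
    have h4 : Dc (P i j) (-(n j - n i)) := by rw [neg_sub]; exact h i j
    exact (forall_coeff_lt_iff (P i j) (n j - n i)).mpr h4 _ (by omega)

theorem glToF_mul (γ δ : GL (Fin d) (Polynomial Fq)) :
    glToF Fq (γ * δ) = glToF Fq γ * glToF Fq δ := by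
  show ((↑(γ * δ) : Matrix (Fin d) (Fin d) (Polynomial Fq))).map _ = _
  rw [Units.val_mul, Matrix.map_mul]
  rfl

theorem glToF_one : glToF Fq (1 : GL (Fin d) (Polynomial Fq)) = 1 := by
  show ((↑(1 : GL (Fin d) (Polynomial Fq)) : Matrix (Fin d) (Fin d) (Polynomial Fq))).map _ = _
  rw [Units.val_one, Matrix.map_one _ (map_zero _) (map_one _)]

theorem actM_mul (A B : Matrix (Fin d) (Fin d) (LaurentSeries Fq))
    (L : Submodule (PowerSeries Fq) (Fin d → LaurentSeries Fq)) :
    actM Fq (A * B) L = actM Fq A (actM Fq B L) := by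
  rw [actM, actM, actM, Matrix.mulVecLin_mul]
  rw [← Submodule.map_comp]
  rfl

theorem actM_one (L : Submodule (PowerSeries Fq) (Fin d → LaurentSeries Fq)) :
    actM Fq (1 : Matrix (Fin d) (Fin d) (LaurentSeries Fq)) L = L := by
  rw [actM, Matrix.mulVecLin_one]
  exact Submodule.map_id L

theorem mem_Stab_iff (n : Fin d → ℤ) (γ : GL (Fin d) (Polynomial Fq)) :
    γ ∈ Stab Fq n ↔
      (∀ i j, Dc ((↑γ : Matrix (Fin d) (Fin d) (Polynomial Fq)) i j) (n i - n j)) ∧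
      (∀ i j, Dc ((↑(γ⁻¹) : Matrix (Fin d) (Fin d) (Polynomial Fq)) i j) (n i - n j)) := by
  have key : ∀ δ : GL (Fin d) (Polynomial Fq),
      actM Fq (glToF Fq δ) (lattM Fq n) ≤ lattM Fq n ↔
      ∀ i j, Dc ((↑δ : Matrix (Fin d) (Fin d) (Polynomial Fq)) i j) (n i - n j) :=
    fun δ => actM_le_iff n _
  have hcomp : actM Fq (glToF Fq γ) (actM Fq (glToF Fq γ⁻¹) (lattM Fq n))
      = lattM Fq n := by
    rw [← actM_mul, ← glToF_mul, mul_inv_cancel, glToF_one, actM_one]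
  have hcomp' : actM Fq (glToF Fq γ⁻¹) (actM Fq (glToF Fq γ) (lattM Fq n))
      = lattM Fq n := by
    rw [← actM_mul, ← glToF_mul, inv_mul_cancel, glToF_one, actM_one]
  constructor
  · intro h
    have h1 : actM Fq (glToF Fq γ) (lattM Fq n) ≤ lattM Fq n := le_of_eq h
    have h2 : actM Fq (glToF Fq γ⁻¹) (lattM Fq n) ≤ lattM Fq n := by
      conv_lhs => rw [← h]
      rw [hcomp']
    exact ⟨(key γ).mp h1, (key γ⁻¹).mp h2⟩
  · rintro ⟨h1, h2⟩
    have h1' := (key γ).mpr h1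
    have h2' := (key γ⁻¹).mpr h2
    refine le_antisymm h1' ?_
    conv_lhs => rw [← hcomp]
    exact Submodule.map_mono h2'

theorem Dc_imp {p : Polynomial Fq} {c₁ c₂ : ℤ} (hd : Dc p c₁) (hc : c₁ ≤ c₂ ∨ c₁ < 0) :
    Dc p c₂ :=
  fun k hk => hd k (by rcases hc with h | h <;> omega)

theorem Dc_zero (c : ℤ) : Dc (0 : Polynomial Fq) c := fun k _ => Polynomial.coeff_zero k

theorem Dc_one {c : ℤ} (hc : 0 ≤ c) : Dc (1 : Polynomial Fq) c := fun k hk => by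
  rw [Polynomial.coeff_one, if_neg (by omega)]

theorem Dc_Xpow {e : ℕ} {c : ℤ} (hc : (e : ℤ) ≤ c) : Dc ((X : Polynomial Fq) ^ e) c :=
  fun k hk => by rw [Polynomial.coeff_X_pow, if_neg (by omega)]

theorem Dc_neg {p : Polynomial Fq} {c : ℤ} (hd : Dc p c) : Dc (-p) c := fun k hk => by
  rw [Polynomial.coeff_neg, hd k hk, neg_zero]

/-- the chain lemma: comparing `n₁`- and `n₂`-gaps along an interval -/
theorem chain {n₁ n₂ : Fin d → ℤ} (hn₁ : NT n₁)
    (h : ∀ (i : ℕ) (h : i + 1 < d),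
      mdiff n₁ i h ≤ mdiff n₂ i h ∧ (mdiff n₁ i h = 0 ↔ mdiff n₂ i h = 0))
    (a : ℕ) (ha : a < d) :
    ∀ b : ℕ, a ≤ b → ∀ hb : b < d,
      (n₁ ⟨a, ha⟩ - n₁ ⟨b, hb⟩ ≤ n₂ ⟨a, ha⟩ - n₂ ⟨b, hb⟩) ∧
      (n₁ ⟨a, ha⟩ = n₁ ⟨b, hb⟩ → n₂ ⟨a, ha⟩ = n₂ ⟨b, hb⟩) := by
  intro b hab
  induction b, hab using Nat.le_induction with
  | base => exact fun hb => ⟨by rw [sub_self, sub_self], fun _ => rfl⟩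
  | succ b hab ih =>
    intro hb
    have hbd : b < d := Nat.lt_of_succ_lt hb
    obtain ⟨ih1, ih2⟩ := ih hbd
    obtain ⟨hm, hz⟩ := h b hb
    rw [mdiff, mdiff] at hm hz
    have hmono : n₁ ⟨b + 1, hb⟩ ≤ n₁ ⟨b, hbd⟩ :=
      hn₁.1 ⟨b, hbd⟩ ⟨b + 1, hb⟩ (by simp [Fin.mk_le_mk])
    have hmono2 : n₁ ⟨b, hbd⟩ ≤ n₁ ⟨a, ha⟩ :=
      hn₁.1 ⟨a, ha⟩ ⟨b, hbd⟩ (by simp [Fin.mk_le_mk, hab])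
    constructor
    · omega
    · intro he
      have h1 : n₁ ⟨a, ha⟩ = n₁ ⟨b, hbd⟩ := by omega
      have h2 : n₂ ⟨a, ha⟩ = n₂ ⟨b, hbd⟩ := ih2 h1
      have h3 : n₂ ⟨b, hbd⟩ - n₂ ⟨b + 1, hb⟩ = 0 := hz.mp (by omega)
      omega

theorem dich {n₁ n₂ : Fin d → ℤ} (hn₁ : NT n₁)
    (h : ∀ (i : ℕ) (h : i + 1 < d),
      mdiff n₁ i h ≤ mdiff n₂ i h ∧ (mdiff n₁ i h = 0 ↔ mdiff n₂ i h = 0))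
    (i j : Fin d) : n₁ i - n₁ j ≤ n₂ i - n₂ j ∨ n₁ i - n₁ j < 0 := by
  rcases le_or_gt (i : ℕ) (j : ℕ) with hij | hij
  · exact Or.inl ((chain hn₁ h i.1 i.2 j.1 hij j.2).1)
  · have hle : n₁ i ≤ n₁ j := hn₁.1 j i (Fin.le_def.mpr (le_of_lt hij))
    by_cases he : n₁ i = n₁ j
    · left
      have h2 := (chain hn₁ h j.1 j.2 i.1 (le_of_lt hij) i.2).2 he.symm
      simp only [Fin.eta] at h2
      omega
    · right
      omega


open Matrix Polynomial in
/-- for `n̄¹, n̄² ∈ N_T^d` with difference sequences `m¹, m²`, the containment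
`S_{n̄¹} ⊆ S_{n̄²}` holds iff for every `i` one has `m¹_i ≤ m²_i` and (`m¹_i = 0 ↔ m²_i = 0`). -/
theorem stabilizer_subset_iff (Fq : Type) [Field Fq] [Fintype Fq]
    (d : ℕ) (hd : 2 ≤ d) (n₁ n₂ : Fin d → ℤ) (hn₁ : NT n₁) (hn₂ : NT n₂) :
    Stab Fq n₁ ⊆ Stab Fq n₂ ↔
      ∀ (i : ℕ) (h : i + 1 < d),
        mdiff n₁ i h ≤ mdiff n₂ i h ∧ (mdiff n₁ i h = 0 ↔ mdiff n₂ i h = 0) := by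
  constructor
  · intro hsub i hi
    set a : Fin d := ⟨i, Nat.lt_of_succ_lt hi⟩ with ha
    set b : Fin d := ⟨i + 1, hi⟩ with hb
    have hab : a ≠ b := by
      simp only [ha, hb, ne_eq, Fin.mk.injEq]
      omega
    have hma : mdiff n₁ i hi = n₁ a - n₁ b := rfl
    have hmb : mdiff n₂ i hi = n₂ a - n₂ b := rfl
    have haleb : a ≤ b := Fin.mk_le_mk.mpr (Nat.le_succ i)
    have hm1 : 0 ≤ mdiff n₁ i hi := by
      have := hn₁.1 a b haleb
      omega
    have hm2 : 0 ≤ mdiff n₂ i hi := by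
      have := hn₂.1 a b haleb
      omega
    have key1 : mdiff n₁ i hi ≤ mdiff n₂ i hi := by
      set e : ℕ := (mdiff n₁ i hi).toNat with he
      set T : Matrix (Fin d) (Fin d) (Polynomial Fq) :=
        Matrix.transvection a b (X ^ e) with hT
      set T' : Matrix (Fin d) (Fin d) (Polynomial Fq) :=
        Matrix.transvection a b (-(X ^ e)) with hT'
      have hTT' : T * T' = 1 := by
        rw [hT, hT', Matrix.transvection_mul_transvection_same a b hab, add_neg_cancel,
          Matrix.transvection_zero]
      have hT'T : T' * T = 1 := by
        rw [hT, hT', Matrix.transvection_mul_transvection_same a b hab, neg_add_cancel,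
          Matrix.transvection_zero]
      set γ : GL (Fin d) (Polynomial Fq) := ⟨T, T', hTT', hT'T⟩ with hγ
      have hent : ∀ (c : Polynomial Fq) (p q : Fin d),
          Matrix.transvection a b c p q
            = (if p = q then 1 else 0) + (if a = p ∧ b = q then c else 0) := by
        intro c p q
        rw [Matrix.transvection, Matrix.add_apply, Matrix.one_apply]
        rfl
      have hDcT : ∀ c : Polynomial Fq, Dc c (n₁ a - n₁ b) →
          ∀ p q : Fin d, Dc (Matrix.transvection a b c p q) (n₁ p - n₁ q) := by
        intro c hc p q
        rw [hent]
        by_cases hpq : p = q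
        · subst hpq
          rw [if_pos rfl, if_neg (by rintro ⟨h1, h2⟩; exact hab (h1.trans h2.symm)), add_zero, sub_self]
          exact Dc_one le_rfl
        · rw [if_neg hpq, zero_add]
          by_cases hpq2 : a = p ∧ b = q
          · obtain ⟨rfl, rfl⟩ := hpq2
            rw [if_pos ⟨rfl, rfl⟩]
            exact hc
          · rw [if_neg hpq2]
            exact Dc_zero _
      have hmemb : γ ∈ Stab Fq n₁ := by
        rw [mem_Stab_iff]
        constructor
        · exact hDcT (X ^ e) (Dc_Xpow (by omega)) 
        · exact hDcT (-(X ^ e)) (Dc_neg (Dc_Xpow (by omega)))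
      have hmemb2 := hsub hmemb
      rw [mem_Stab_iff] at hmemb2
      have hd1 := hmemb2.1 a b
      have hTab : (↑γ : Matrix (Fin d) (Fin d) (Polynomial Fq)) a b = X ^ e := by
        show T a b = X ^ e
        rw [hT, hent, if_neg hab, if_pos ⟨rfl, rfl⟩, zero_add]
      rw [hTab] at hd1
      by_contra hlt
      have hzero := hd1 e (by omega)
      rw [Polynomial.coeff_X_pow, if_pos rfl] at hzero
      exact one_ne_zero hzero
    refine ⟨key1, ?_, fun h0 => by omega⟩
    intro h0
    set σ : Equiv.Perm (Fin d) := Equiv.swap a b with hσ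
    set S : Matrix (Fin d) (Fin d) (Polynomial Fq) := σ.toPEquiv.toMatrix with hS
    have hSS : S * S = 1 := by
      rw [hS, ← PEquiv.toMatrix_trans, ← Equiv.toPEquiv_trans, hσ, Equiv.swap_swap,
        Equiv.toPEquiv_refl, PEquiv.toMatrix_refl]
    set γ : GL (Fin d) (Polynomial Fq) := ⟨S, S, hSS, hSS⟩ with hγ
    have hSent : ∀ p q : Fin d, S p q = if σ p = q then (1 : Polynomial Fq) else 0 := by
      intro p q
      rw [hS, PEquiv.toMatrix_apply, Equiv.toPEquiv_apply]
      simp [Option.mem_def]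
    have hn1σ : ∀ p : Fin d, n₁ (σ p) = n₁ p := by
      intro p
      rcases eq_or_ne p a with rfl | hpa
      · rw [hσ, Equiv.swap_apply_left]
        omega
      rcases eq_or_ne p b with rfl | hpb
      · rw [hσ, Equiv.swap_apply_right]
        omega
      · rw [hσ, Equiv.swap_apply_of_ne_of_ne hpa hpb]
    have hDcS : ∀ p q : Fin d, Dc (S p q) (n₁ p - n₁ q) := by
      intro p q
      rw [hSent]
      by_cases hq : σ p = q
      · rw [if_pos hq, ← hq]
        exact Dc_one (by rw [hn1σ p, sub_self])
      · rw [if_neg hq]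
        exact Dc_zero _
    have hmemb : γ ∈ Stab Fq n₁ := (mem_Stab_iff n₁ γ).mpr ⟨hDcS, hDcS⟩
    have hmemb2 := hsub hmemb
    rw [mem_Stab_iff] at hmemb2
    have hd1 := hmemb2.1 b a
    have hSba : (↑γ : Matrix (Fin d) (Fin d) (Polynomial Fq)) b a = 1 := by
      show S b a = 1
      rw [hSent, if_pos (by rw [hσ, Equiv.swap_apply_right])]
    rw [hSba] at hd1
    by_contra hne
    have hzero := hd1 0 (by omega)
    rw [Polynomial.coeff_one, if_pos rfl] at hzero
    exact one_ne_zero hzero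
  · intro h γ hγ
    rw [mem_Stab_iff] at hγ ⊢
    exact ⟨fun i j => Dc_imp (hγ.1 i j) (dich hn₁ h i j),
      fun i j => Dc_imp (hγ.2 i j) (dich hn₁ h i j)⟩
end

section
/- Let $d = 3$ and let $n_1 > n_2 \ge 1$ be integers. Then: (a) $S_{(n_1,n_2,0)} \subseteq S_{(n_1+1,n_2,0)}$ and the index $[S_{(n_1+1,n_2,0)} : S_{(n_1,n_2,0)}]$ equals $q^2$ (edge of type 8 in the weight table); (b) if moreover $n_1 > n_2 + 1$, then the intersection $S_{(n_1,n_2,0)} \cap S_{(n_1,n_2+1,0)}$ has cardinality $(q-1)^3 q^{2n_1+2}$, and its index in each of $S_{(n_1,n_2,0)}$ and $S_{(n_1,n_2+1,0)}$ equals $q$ (edge of type 11 in the weight table). -/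
open Matrix Polynomial

open HahnSeries
namespace EdgeAux
variable {Fq : Type} [Field Fq]

def Vle (s : ℤ) (x : LaurentSeries Fq) : Prop := ∀ k : ℤ, k < s → x.coeff k = 0

lemma vle_zero (s : ℤ) : Vle s (0 : LaurentSeries Fq) := fun _ _ => rfl

lemma vle_add {s : ℤ} {x y : LaurentSeries Fq} (hx : Vle s x) (hy : Vle s y) :
    Vle s (x + y) := fun k hk => by
  rw [HahnSeries.coeff_add, hx k hk, hy k hk, add_zero]

lemma vle_mul {s r : ℤ} {x y : LaurentSeries Fq} (hx : Vle s x) (hy : Vle r y) :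
    Vle (s + r) (x * y) := by
  intro k hk
  rw [HahnSeries.coeff_mul]
  refine Finset.sum_eq_zero fun ij hij => ?_
  rw [Finset.mem_addAntidiagonal] at hij
  rcases lt_or_ge ij.1 s with h | h
  · rw [hx _ h, zero_mul]
  · rw [hy ij.2 (by have := hij.2.2; omega), mul_zero]

lemma vle_single (m : ℤ) (a : Fq) : Vle m (single m a : LaurentSeries Fq) := by
  intro k hk
  rw [HahnSeries.coeff_single, if_neg (by omega)]

lemma vle_ofPowerSeries (c : PowerSeries Fq) :
    Vle 0 (HahnSeries.ofPowerSeries ℤ Fq c) := by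
  intro k hk
  have := PowerSeries.coeff_coe (f := c) (R := Fq) k
  rw [show ((ofPowerSeries ℤ Fq) c) = ((c : PowerSeries Fq) : LaurentSeries Fq) from rfl, this]
  exact if_pos hk

lemma exists_ofPowerSeries {x : LaurentSeries Fq}
    (hx : ∀ k : ℤ, k < 0 → x.coeff k = 0) :
    ∃ p : PowerSeries Fq, HahnSeries.ofPowerSeries ℤ Fq p = x := by
  by_cases h0 : x = 0
  · exact ⟨0, by simp [h0]⟩
  have hord : 0 ≤ x.order := by
    by_contra h
    exact h0 (coeff_order_eq_zero.mp (hx _ (not_le.mp h)))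
  refine ⟨PowerSeries.X ^ x.order.toNat * x.powerSeriesPart, ?_⟩
  rw [_root_.map_mul, ofPowerSeries_X_pow, Int.toNat_of_nonneg hord]
  exact x.single_order_mul_powerSeriesPart

lemma vle_smul {s : ℤ} {x : LaurentSeries Fq} (c : PowerSeries Fq) (hx : Vle s x) :
    Vle s (c • x) := by
  have : c • x = (HahnSeries.ofPowerSeries ℤ Fq c) * x := by
    rw [← LaurentSeries.coe_algebraMap]; exact Algebra.smul_def c x
  rw [this]
  have := vle_mul (vle_ofPowerSeries c) hx
  rwa [zero_add] at this

/-- the lattice as a pointwise-defined submodule -/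
def lattM' {d : ℕ} (n : Fin d → ℤ) : Submodule (PowerSeries Fq) (Fin d → LaurentSeries Fq) where
  carrier := {v | ∀ i, Vle (-(n i)) (v i)}
  add_mem' hx hy i := vle_add (hx i) (hy i)
  zero_mem' i := vle_zero _
  smul_mem' c v hv i := by
    have : (c • v) i = c • (v i) := rfl
    rw [this]
    exact vle_smul c (hv i)

lemma gen_apply {d : ℕ} (n : Fin d → ℤ) (i j : Fin d) :
    ((HahnSeries.single (-(n i)) (1 : Fq) : LaurentSeries Fq) •
        (Pi.single i (1 : LaurentSeries Fq) : Fin d → LaurentSeries Fq)) j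
      = if j = i then (HahnSeries.single (-(n i)) (1 : Fq) : LaurentSeries Fq) else 0 := by
  rw [Pi.smul_apply, smul_eq_mul]
  by_cases h : j = i
  · subst h; rw [Pi.single_eq_same, mul_one, if_pos rfl]
  · rw [Pi.single_eq_of_ne h, mul_zero, if_neg h]

lemma mem_lattM {d : ℕ} (n : Fin d → ℤ) (v : Fin d → LaurentSeries Fq) :
    v ∈ lattM Fq n ↔ ∀ i, Vle (-(n i)) (v i) := by
  constructor
  · intro hv
    have : lattM Fq n ≤ lattM' n := by
      rw [lattM, Submodule.span_le]
      rintro _ ⟨i, rfl⟩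
      intro j
      dsimp only
      rw [gen_apply]
      by_cases h : j = i
      · subst h; rw [if_pos rfl]; exact vle_single _ _
      · rw [if_neg h]; exact vle_zero _
    exact this hv
  · intro hv
    have hv' : v = ∑ i, Pi.single i (v i) := by
      rw [Finset.univ_sum_single]
    rw [hv']
    refine Submodule.sum_mem _ fun i _ => ?_
    obtain ⟨p, hp⟩ := exists_ofPowerSeries (x := (single (n i) (1:Fq) : LaurentSeries Fq) * v i)
      (by
        have := vle_mul (vle_single (n i) (1:Fq)) (hv i)
        rwa [add_neg_cancel] at this)
    have key : Pi.single i (v i) = p •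
        ((HahnSeries.single (-(n i)) (1 : Fq) : LaurentSeries Fq) •
          (Pi.single i (1 : LaurentSeries Fq) : Fin d → LaurentSeries Fq)) := by
      funext j
      have hs : (p • ((HahnSeries.single (-(n i)) (1 : Fq) : LaurentSeries Fq) •
          (Pi.single i (1 : LaurentSeries Fq) : Fin d → LaurentSeries Fq))) j
          = (HahnSeries.ofPowerSeries ℤ Fq p) *
            (((HahnSeries.single (-(n i)) (1 : Fq) : LaurentSeries Fq) •
          (Pi.single i (1 : LaurentSeries Fq) : Fin d → LaurentSeries Fq)) j) := by
        rw [Pi.smul_apply, ← LaurentSeries.coe_algebraMap]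
        exact Algebra.smul_def p _
      rw [hs, gen_apply]
      by_cases h : j = i
      · subst h
        rw [if_pos rfl, Pi.single_eq_same, hp]
        rw [mul_comm, ← mul_assoc, HahnSeries.single_mul_single, neg_add_cancel, one_mul,
          HahnSeries.single_zero_one, one_mul]
      · rw [if_neg h, Pi.single_eq_of_ne h, mul_zero]
    rw [key]
    exact Submodule.smul_mem _ _ (Submodule.subset_span ⟨i, rfl⟩)

end EdgeAux

namespace EdgeAux
variable {Fq : Type} [Field Fq]

lemma vle_mul_single_iff {s m : ℤ} {x : LaurentSeries Fq} :
    Vle s (x * (single m (1:Fq) : LaurentSeries Fq)) ↔ Vle (s - m) x := by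
  have hc : ∀ k : ℤ, (x * (single m (1:Fq) : LaurentSeries Fq)).coeff k = x.coeff (k - m) := by
    intro k
    have := HahnSeries.coeff_mul_single_add (r := (1:Fq)) (x := x) (b := m) (a := k - m)
    rw [sub_add_cancel] at this
    rw [this, mul_one]
  constructor
  · intro h k hk
    have := h (k + m) (by omega)
    rwa [hc, add_sub_cancel_right] at this
  · intro h k hk
    rw [hc]
    exact h _ (by omega)

lemma mulVec_gen {d : ℕ} (g : Matrix (Fin d) (Fin d) (LaurentSeries Fq)) (n : Fin d → ℤ)
    (j i : Fin d) :
    g.mulVec ((HahnSeries.single (-(n j)) (1 : Fq) : LaurentSeries Fq) •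
        (Pi.single j (1 : LaurentSeries Fq) : Fin d → LaurentSeries Fq)) i
      = g i j * (single (-(n j)) (1:Fq) : LaurentSeries Fq) := by
  rw [Matrix.mulVec, dotProduct]
  rw [Finset.sum_eq_single j]
  · rw [gen_apply, if_pos rfl]
  · intro k _ hk
    rw [gen_apply, if_neg hk, mul_zero]
  · intro h; exact absurd (Finset.mem_univ j) h

lemma lattM_le_iff {d : ℕ} (n : Fin d → ℤ)
    (P : Submodule (PowerSeries Fq) (Fin d → LaurentSeries Fq)) :
    lattM Fq n ≤ P ↔ ∀ j : Fin d, ((HahnSeries.single (-(n j)) (1 : Fq) : LaurentSeries Fq) •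
        (Pi.single j (1 : LaurentSeries Fq) : Fin d → LaurentSeries Fq)) ∈ P := by
  rw [lattM, Submodule.span_le, Set.range_subset_iff]
  simp only [SetLike.mem_coe]

lemma actM_le_iff {d : ℕ} (g : Matrix (Fin d) (Fin d) (LaurentSeries Fq)) (n : Fin d → ℤ) :
    actM Fq g (lattM Fq n) ≤ lattM Fq n ↔ ∀ i j, Vle (n j - n i) (g i j) := by
  rw [actM, Submodule.map_le_iff_le_comap, lattM_le_iff]
  have e : ∀ i j : Fin d, -(n i) - -(n j) = n j - n i := by intro i j; ring
  constructor
  · intro h i j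
    have hj := h j
    rw [Submodule.mem_comap, LinearMap.restrictScalars_apply, Matrix.mulVecLin_apply,
      mem_lattM] at hj
    have := hj i
    rw [mulVec_gen, vle_mul_single_iff, e] at this
    exact this
  · intro h j
    rw [Submodule.mem_comap, LinearMap.restrictScalars_apply, Matrix.mulVecLin_apply,
      mem_lattM]
    intro i
    rw [mulVec_gen, vle_mul_single_iff, e]
    exact h i j

lemma coeff_polyToF (p : Polynomial Fq) (k : ℤ) :
    (polyToF Fq p).coeff k = if k ≤ 0 then p.coeff (-k).toNat else 0 := by
  induction p using Polynomial.induction_on' with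
  | add f g hf hg =>
      rw [map_add, HahnSeries.coeff_add, hf, hg, Polynomial.coeff_add]
      split_ifs <;> simp
  | monomial m a =>
      rw [polyToF, Polynomial.coe_eval₂RingHom, Polynomial.eval₂_monomial, tF]
      rw [HahnSeries.single_pow, one_pow]
      rw [show HahnSeries.C a = HahnSeries.single (0:ℤ) a from rfl,
        HahnSeries.single_mul_single, zero_add, HahnSeries.coeff_single]
      rw [Polynomial.coeff_monomial]
      have : (m : ℕ) • (-1 : ℤ) = -(m:ℤ) := by simp
      rw [this]
      by_cases h : k = -(m:ℤ)
      · rw [if_pos h, if_pos (by omega), if_pos (by omega), mul_one]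
      · rw [if_neg h]
        split_ifs with h1 h2
        · exact absurd (by omega : k = -(m:ℤ)) h
        · rfl
        · rfl

lemma vle_polyToF {p : Polynomial Fq} {s : ℤ} :
    Vle s (polyToF Fq p) ↔ ∀ m : ℕ, -s < (m:ℤ) → p.coeff m = 0 := by
  constructor
  · intro h m hm
    have := h (-(m:ℤ)) (by omega)
    rwa [coeff_polyToF, if_pos (by omega), neg_neg, Int.toNat_natCast] at this
  · intro h k hk
    rw [coeff_polyToF]
    split_ifs with h1
    · exact h (-k).toNat (by omega)
    · rfl

/-- the degree-bound condition on a matrix of polynomials -/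
def Cond (B : Fin 3 → Fin 3 → ℤ) (M : Matrix (Fin 3) (Fin 3) (Polynomial Fq)) : Prop :=
  ∀ i j, ∀ m : ℕ, B i j < (m : ℤ) → (M i j).coeff m = 0

lemma actM_le_iff' (γ : GL (Fin 3) (Polynomial Fq)) (n : Fin 3 → ℤ) :
    actM Fq (glToF Fq γ) (lattM Fq n) ≤ lattM Fq n ↔
      Cond (fun i j => n i - n j) (γ : Matrix (Fin 3) (Fin 3) (Polynomial Fq)) := by
  rw [actM_le_iff]
  constructor
  · intro h i j m hm
    have hm' : n i - n j < (m:ℤ) := hm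
    exact (vle_polyToF (s := n j - n i)).mp (by
      have := h i j
      rwa [glToF, Matrix.map_apply] at this) m (by omega)
  · intro h i j
    rw [glToF, Matrix.map_apply]
    rw [vle_polyToF]
    intro m hm
    exact h i j m (by show n i - n j < (m:ℤ); omega)

end EdgeAux

namespace EdgeAux
variable {Fq : Type} [Field Fq]

lemma cmul {p q : Polynomial Fq} {a b c : ℤ}
    (hp : ∀ m : ℕ, a < (m:ℤ) → p.coeff m = 0) (hq : ∀ m : ℕ, b < (m:ℤ) → q.coeff m = 0)
    (habc : a + b ≤ c) : ∀ m : ℕ, c < (m:ℤ) → (p * q).coeff m = 0 := by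
  intro m hm
  rw [Polynomial.coeff_mul]
  refine Finset.sum_eq_zero fun ij hij => ?_
  rw [Finset.HasAntidiagonal.mem_antidiagonal] at hij
  rcases lt_or_ge a (ij.1 : ℤ) with h | h
  · rw [hp _ h, zero_mul]
  · rw [hq ij.2 (by omega), mul_zero]

lemma csub {p q : Polynomial Fq} {c : ℤ}
    (hp : ∀ m : ℕ, c < (m:ℤ) → p.coeff m = 0) (hq : ∀ m : ℕ, c < (m:ℤ) → q.coeff m = 0) :
    ∀ m : ℕ, c < (m:ℤ) → (p - q).coeff m = 0 := by
  intro m hm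
  rw [Polynomial.coeff_sub, hp m hm, hq m hm, sub_zero]

lemma cond_adjugate (n : Fin 3 → ℤ) (M : Matrix (Fin 3) (Fin 3) (Polynomial Fq))
    (h : Cond (fun i j => n i - n j) M) :
    Cond (fun i j => n i - n j) (Matrix.adjugate M) := by
  intro i j m hm
  have hm' : n i - n j < (m:ℤ) := hm
  have H : ∀ i₁ j₁ i₂ j₂ : Fin 3, (n i₁ - n j₁) + (n i₂ - n j₂) ≤ n i - n j →
      (M i₁ j₁ * M i₂ j₂).coeff m = 0 := fun i₁ j₁ i₂ j₂ hle =>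
    cmul (h i₁ j₁) (h i₂ j₂) hle m hm'
  have Hs : ∀ i₁ j₁ i₂ j₂ i₃ j₃ i₄ j₄ : Fin 3,
      (n i₁ - n j₁) + (n i₂ - n j₂) ≤ n i - n j →
      (n i₃ - n j₃) + (n i₄ - n j₄) ≤ n i - n j →
      (M i₁ j₁ * M i₂ j₂ - M i₃ j₃ * M i₄ j₄).coeff m = 0 := fun i₁ j₁ i₂ j₂ i₃ j₃ i₄ j₄ h1 h2 =>
    csub (fun k hk => cmul (h i₁ j₁) (h i₂ j₂) h1 k hk)
      (fun k hk => cmul (h i₃ j₃) (h i₄ j₄) h2 k hk) m hm'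
  rw [Matrix.adjugate_fin_three]
  fin_cases i <;> fin_cases j <;>
    simp only [Matrix.cons_val', Matrix.cons_val_zero, Matrix.cons_val_one, Matrix.head_cons,
      Matrix.empty_val', Matrix.cons_val_fin_one, Matrix.head_fin_const, Matrix.cons_val_two,
      Matrix.tail_cons, Fin.mk_zero, Fin.mk_one, Fin.isValue, Matrix.of_apply, neg_add_eq_sub] <;>
    simp only [Fin.reduceFinMk, Fin.mk_zero, Fin.mk_one, Fin.isValue] at Hs hm' <;>
    (apply Hs <;> omega)

lemma cond_inv (n : Fin 3 → ℤ) (γ : GL (Fin 3) (Polynomial Fq))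
    (h : Cond (fun i j => n i - n j) (γ : Matrix (Fin 3) (Fin 3) (Polynomial Fq))) :
    Cond (fun i j => n i - n j) ((γ⁻¹ : GL (Fin 3) (Polynomial Fq)) :
      Matrix (Fin 3) (Fin 3) (Polynomial Fq)) := by
  have hdet : IsUnit (γ : Matrix (Fin 3) (Fin 3) (Polynomial Fq)).det :=
    (Matrix.isUnit_iff_isUnit_det _).mp γ.isUnit
  have hinv : ((γ⁻¹ : GL (Fin 3) (Polynomial Fq)) : Matrix (Fin 3) (Fin 3) (Polynomial Fq)) =
      Ring.inverse (γ : Matrix (Fin 3) (Fin 3) (Polynomial Fq)).det •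
        Matrix.adjugate (γ : Matrix (Fin 3) (Fin 3) (Polynomial Fq)) := by
    rw [← Matrix.inv_def, Matrix.coe_units_inv]
  have hu : IsUnit (Ring.inverse (γ : Matrix (Fin 3) (Fin 3) (Polynomial Fq)).det) := by
    rw [← hdet.unit_spec, Ring.inverse_unit]
    exact (hdet.unit⁻¹).isUnit
  obtain ⟨c, -, hc⟩ := Polynomial.isUnit_iff.mp hu
  intro i j m hm
  rw [hinv, Matrix.smul_apply, ← hc, smul_eq_mul, Polynomial.coeff_C_mul,
    cond_adjugate n _ h i j m hm, mul_zero]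

end EdgeAux

namespace EdgeAux
variable {Fq : Type} [Field Fq]

lemma actM_mul {d : ℕ} (g h : Matrix (Fin d) (Fin d) (LaurentSeries Fq))
    (L : Submodule (PowerSeries Fq) (Fin d → LaurentSeries Fq)) :
    actM Fq g (actM Fq h L) = actM Fq (g * h) L := by
  rw [actM, actM, actM, ← Submodule.map_comp]
  congr 1
  ext v i
  simp [Matrix.mulVecLin_mul]

lemma actM_one {d : ℕ} (L : Submodule (PowerSeries Fq) (Fin d → LaurentSeries Fq)) :
    actM Fq (1 : Matrix (Fin d) (Fin d) (LaurentSeries Fq)) L = L := by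
  rw [actM]
  have : ((1 : Matrix (Fin d) (Fin d) (LaurentSeries Fq)).mulVecLin).restrictScalars
      (PowerSeries Fq) = LinearMap.id := by
    ext v i
    simp
  rw [this, Submodule.map_id]

lemma glToF_mul_glToF_inv (γ : GL (Fin 3) (Polynomial Fq)) :
    glToF Fq γ * glToF Fq γ⁻¹ = 1 := by
  rw [glToF, glToF, ← Matrix.map_mul]
  have : (γ : Matrix (Fin 3) (Fin 3) (Polynomial Fq)) *
      ((γ⁻¹ : GL (Fin 3) (Polynomial Fq)) : Matrix (Fin 3) (Fin 3) (Polynomial Fq)) = 1 := by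
    rw [← Units.val_mul, mul_inv_cancel, Units.val_one]
  rw [this, Matrix.map_one _ (map_zero _) (map_one _)]

lemma stab_eq (n : Fin 3 → ℤ) :
    Stab Fq n = {γ : GL (Fin 3) (Polynomial Fq) |
      Cond (fun i j => n i - n j) (γ : Matrix (Fin 3) (Fin 3) (Polynomial Fq))} := by
  ext γ
  constructor
  · intro hγ
    exact (actM_le_iff' γ n).mp (le_of_eq hγ)
  · intro hγ
    have h1 : actM Fq (glToF Fq γ) (lattM Fq n) ≤ lattM Fq n := (actM_le_iff' γ n).mpr hγ
    have h2 : actM Fq (glToF Fq γ⁻¹) (lattM Fq n) ≤ lattM Fq n :=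
      (actM_le_iff' γ⁻¹ n).mpr (cond_inv n γ hγ)
    refine le_antisymm h1 ?_
    have := Submodule.map_mono (f := ((glToF Fq γ).mulVecLin).restrictScalars (PowerSeries Fq)) h2
    have h3 : actM Fq (glToF Fq γ) (actM Fq (glToF Fq γ⁻¹) (lattM Fq n)) ≤
        actM Fq (glToF Fq γ) (lattM Fq n) := this
    rwa [actM_mul, glToF_mul_glToF_inv, actM_one] at h3

end EdgeAux

namespace EdgeAux
variable {Fq : Type} [Field Fq]
open Polynomial

noncomputable section

/-- upper triangular matrix built from data -/
def bmat (u₀ u₁ u₂ : Fqˣ) (p r s : Polynomial Fq) : Matrix (Fin 3) (Fin 3) (Polynomial Fq) :=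
  !![Polynomial.C ↑u₀, p, r; 0, Polynomial.C ↑u₁, s; 0, 0, Polynomial.C ↑u₂]

lemma bmat_det (u₀ u₁ u₂ : Fqˣ) (p r s : Polynomial Fq) :
    (bmat u₀ u₁ u₂ p r s).det = Polynomial.C ((u₀ : Fq) * u₁ * u₂) := by
  rw [Matrix.det_fin_three]
  simp [bmat, Matrix.vecHead, Matrix.vecTail]

lemma bmat_isUnit (u₀ u₁ u₂ : Fqˣ) (p r s : Polynomial Fq) :
    IsUnit (bmat u₀ u₁ u₂ p r s) :=
  (Matrix.isUnit_iff_isUnit_det _).mpr (by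
    rw [bmat_det]
    exact Polynomial.isUnit_C.mpr (((u₀ * u₁ * u₂ : Fqˣ)).isUnit))

/-- the corresponding element of `GL₃` -/
def bgl (u₀ u₁ u₂ : Fqˣ) (p r s : Polynomial Fq) : GL (Fin 3) (Polynomial Fq) :=
  (bmat_isUnit u₀ u₁ u₂ p r s).unit

lemma bgl_val (u₀ u₁ u₂ : Fqˣ) (p r s : Polynomial Fq) :
    (bgl u₀ u₁ u₂ p r s : Matrix (Fin 3) (Fin 3) (Polynomial Fq)) = bmat u₀ u₁ u₂ p r s :=
  (bmat_isUnit u₀ u₁ u₂ p r s).unit_spec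

end

lemma card_cond [Fintype Fq] (b01 b02 b12 : ℕ) (B : Fin 3 → Fin 3 → ℤ)
    (h00 : B 0 0 = 0) (h11 : B 1 1 = 0) (h22 : B 2 2 = 0)
    (h01 : B 0 1 = b01) (h02 : B 0 2 = b02) (h12 : B 1 2 = b12)
    (h10 : B 1 0 < 0) (h20 : B 2 0 < 0) (h21 : B 2 1 < 0) :
    Nat.card {γ : GL (Fin 3) (Polynomial Fq) |
        Cond B (γ : Matrix (Fin 3) (Fin 3) (Polynomial Fq))}
      = (Fintype.card Fq - 1)^3 * (Fintype.card Fq)^(b01 + b02 + b12 + 3) := by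
  classical
  set D : Type := (Fqˣ × Fqˣ × Fqˣ) ×
    (degreeLT Fq (b01+1) × degreeLT Fq (b02+1) × degreeLT Fq (b12+1)) with hD
  have hcoeff : ∀ (k : ℕ) (p : Polynomial Fq), p ∈ degreeLT Fq k →
      ∀ m : ℕ, k ≤ m → p.coeff m = 0 := by
    intro k p hp m hm
    refine Polynomial.coeff_eq_zero_of_degree_lt ?_
    exact lt_of_lt_of_le (Polynomial.mem_degreeLT.mp hp) (by exact_mod_cast hm)
  have fmem : ∀ x : D, Cond B ((bgl x.1.1 x.1.2.1 x.1.2.2 x.2.1 x.2.2.1 x.2.2.2 :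
      GL (Fin 3) (Polynomial Fq)) : Matrix (Fin 3) (Fin 3) (Polynomial Fq)) := by
    rintro ⟨⟨u₀, u₁, u₂⟩, ⟨p, hp⟩, ⟨r, hr⟩, ⟨s, hs⟩⟩ i j m hm
    have hm' : B i j < (m : ℤ) := hm
    rw [bgl_val]
    fin_cases i <;> fin_cases j <;>
      simp only [bmat, Matrix.cons_val', Matrix.cons_val_zero, Matrix.cons_val_one,
        Matrix.head_cons, Matrix.empty_val', Matrix.cons_val_fin_one, Matrix.head_fin_const,
        Matrix.cons_val_two, Matrix.tail_cons, Matrix.of_apply, Fin.mk_zero, Fin.mk_one,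
        Fin.isValue, Fin.reduceFinMk] <;>
      simp only [Fin.reduceFinMk, Fin.mk_zero, Fin.mk_one, Fin.isValue] at hm' <;>
      first
        | (rw [Polynomial.coeff_C, if_neg (by omega)])
        | (exact hcoeff _ _ hp m (by omega))
        | (exact hcoeff _ _ hr m (by omega))
        | (exact hcoeff _ _ hs m (by omega))
        | (rw [Polynomial.coeff_zero])
  let f : D → {γ : GL (Fin 3) (Polynomial Fq) |
      Cond B (γ : Matrix (Fin 3) (Fin 3) (Polynomial Fq))} :=
    fun x => ⟨bgl x.1.1 x.1.2.1 x.1.2.2 x.2.1 x.2.2.1 x.2.2.2, fmem x⟩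
  have hbij : Function.Bijective f := by
    constructor
    · rintro ⟨⟨u₀, u₁, u₂⟩, ⟨p, hp⟩, ⟨r, hr⟩, ⟨s, hs⟩⟩
        ⟨⟨u₀', u₁', u₂'⟩, ⟨p', hp'⟩, ⟨r', hr'⟩, ⟨s', hs'⟩⟩ hfeq
      have hmat : bmat u₀ u₁ u₂ p r s = bmat u₀' u₁' u₂' p' r' s' := by
        have := congrArg (fun z => ((z : {γ : GL (Fin 3) (Polynomial Fq) |
          Cond B (γ : Matrix (Fin 3) (Fin 3) (Polynomial Fq))}) :
            GL (Fin 3) (Polynomial Fq)).val) hfeq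
        simpa only [f, bgl_val] using this
      have e00 := congrFun (congrFun hmat 0) 0
      have e11 := congrFun (congrFun hmat 1) 1
      have e22 := congrFun (congrFun hmat 2) 2
      have e01 := congrFun (congrFun hmat 0) 1
      have e02 := congrFun (congrFun hmat 0) 2
      have e12 := congrFun (congrFun hmat 1) 2
      simp only [bmat, Matrix.cons_val', Matrix.cons_val_zero, Matrix.cons_val_one,
        Matrix.head_cons, Matrix.empty_val', Matrix.cons_val_fin_one, Matrix.head_fin_const,
        Matrix.cons_val_two, Matrix.tail_cons, Matrix.of_apply] at e00 e11 e22 e01 e02 e12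
      refine Prod.ext ?_ ?_
      · refine Prod.ext ?_ (Prod.ext ?_ ?_) <;> dsimp <;>
          [exact Units.ext (Polynomial.C_injective e00);
           exact Units.ext (Polynomial.C_injective e11);
           exact Units.ext (Polynomial.C_injective e22)]
      · refine Prod.ext ?_ (Prod.ext ?_ ?_) <;> dsimp <;>
          [exact Subtype.ext e01; exact Subtype.ext e02; exact Subtype.ext e12]
    · rintro ⟨γ, hγ⟩
      have hγ' : Cond B (γ : Matrix (Fin 3) (Fin 3) (Polynomial Fq)) := hγ
      have hz : ∀ (i j : Fin 3), B i j < 0 →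
          (γ : Matrix (Fin 3) (Fin 3) (Polynomial Fq)) i j = 0 := by
        intro i j hij
        ext m
        rw [hγ' i j m (by omega), Polynomial.coeff_zero]
      have hdiag : ∀ (i j : Fin 3), B i j = 0 →
          (γ : Matrix (Fin 3) (Fin 3) (Polynomial Fq)) i j =
            Polynomial.C (((γ : Matrix (Fin 3) (Fin 3) (Polynomial Fq)) i j).coeff 0) := by
        intro i j hij
        ext m
        match m with
        | 0 => rw [Polynomial.coeff_C, if_pos rfl]
        | (k+1) => rw [hγ' i j (k+1) (by omega), Polynomial.coeff_C, if_neg (Nat.succ_ne_zero k)]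
      have hdet : IsUnit (γ : Matrix (Fin 3) (Fin 3) (Polynomial Fq)).det :=
        (Matrix.isUnit_iff_isUnit_det _).mp γ.isUnit
      rw [Matrix.det_fin_three, hz 1 0 h10, hz 2 0 h20, hz 2 1 h21] at hdet
      simp only [mul_zero, zero_mul, sub_zero, add_zero, zero_sub, zero_add, neg_zero] at hdet
      have hA : IsUnit ((γ : Matrix (Fin 3) (Fin 3) (Polynomial Fq)) 0 0 *
          (γ : Matrix (Fin 3) (Fin 3) (Polynomial Fq)) 1 1) := isUnit_of_mul_isUnit_left hdet
      have hu0 : IsUnit (((γ : Matrix (Fin 3) (Fin 3) (Polynomial Fq)) 0 0).coeff 0) := by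
        have h1 := isUnit_of_mul_isUnit_left hA
        rw [hdiag 0 0 h00] at h1
        exact Polynomial.isUnit_C.mp h1
      have hu1 : IsUnit (((γ : Matrix (Fin 3) (Fin 3) (Polynomial Fq)) 1 1).coeff 0) := by
        have h1 := isUnit_of_mul_isUnit_right hA
        rw [hdiag 1 1 h11] at h1
        exact Polynomial.isUnit_C.mp h1
      have hu2 : IsUnit (((γ : Matrix (Fin 3) (Fin 3) (Polynomial Fq)) 2 2).coeff 0) := by
        have h1 := isUnit_of_mul_isUnit_right hdet
        rw [hdiag 2 2 h22] at h1
        exact Polynomial.isUnit_C.mp h1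
      have hmemLT : ∀ (i j : Fin 3) (b : ℕ), B i j = b →
          (γ : Matrix (Fin 3) (Fin 3) (Polynomial Fq)) i j ∈ degreeLT Fq (b+1) := by
        intro i j b hb
        rw [Polynomial.mem_degreeLT]
        rw [show ((b + 1 : ℕ) : WithBot ℕ) = ((b+1 : ℕ) : ℕ) from rfl]
        rw [Polynomial.degree_lt_iff_coeff_zero]
        intro m hm
        exact hγ' i j m (by omega)
      refine ⟨⟨⟨hu0.unit, hu1.unit, hu2.unit⟩,
        ⟨(γ : Matrix (Fin 3) (Fin 3) (Polynomial Fq)) 0 1, hmemLT 0 1 _ h01⟩,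
        ⟨(γ : Matrix (Fin 3) (Fin 3) (Polynomial Fq)) 0 2, hmemLT 0 2 _ h02⟩,
        ⟨(γ : Matrix (Fin 3) (Fin 3) (Polynomial Fq)) 1 2, hmemLT 1 2 _ h12⟩⟩, ?_⟩
      refine Subtype.ext (Units.ext ?_)
      simp only [f]
      rw [bgl_val]
      have g00 : Polynomial.C (hu0.unit : Fq) =
          (γ : Matrix (Fin 3) (Fin 3) (Polynomial Fq)) 0 0 := by
        rw [hu0.unit_spec]; exact (hdiag 0 0 h00).symm
      have g11 : Polynomial.C (hu1.unit : Fq) =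
          (γ : Matrix (Fin 3) (Fin 3) (Polynomial Fq)) 1 1 := by
        rw [hu1.unit_spec]; exact (hdiag 1 1 h11).symm
      have g22 : Polynomial.C (hu2.unit : Fq) =
          (γ : Matrix (Fin 3) (Fin 3) (Polynomial Fq)) 2 2 := by
        rw [hu2.unit_spec]; exact (hdiag 2 2 h22).symm
      refine Matrix.ext fun i j => ?_
      fin_cases i <;> fin_cases j <;>
        simp only [bmat, Matrix.cons_val', Matrix.cons_val_zero, Matrix.cons_val_one,
          Matrix.head_cons, Matrix.empty_val', Matrix.cons_val_fin_one, Matrix.head_fin_const,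
          Matrix.cons_val_two, Matrix.tail_cons, Matrix.of_apply, Fin.mk_zero, Fin.mk_one,
          Fin.isValue, Fin.reduceFinMk] <;>
        first
          | exact g00 | exact g11 | exact g22
          | rfl
          | exact (hz 1 0 h10).symm | exact (hz 2 0 h20).symm | exact (hz 2 1 h21).symm
  have hcard := Nat.card_eq_of_bijective f hbij
  rw [← hcard]
  have cdeg : ∀ k : ℕ, Nat.card (degreeLT Fq k) = Fintype.card Fq ^ k := by
    intro k
    rw [Nat.card_congr (Polynomial.degreeLTEquiv Fq k).toEquiv, Nat.card_eq_fintype_card,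
      Fintype.card_fun, Fintype.card_fin]
  rw [hD, Nat.card_prod, Nat.card_prod, Nat.card_prod, Nat.card_prod, Nat.card_prod,
    Nat.card_eq_fintype_card (α := Fqˣ), Fintype.card_units, cdeg, cdeg, cdeg]
  ring

end EdgeAux

namespace EdgeAux
variable {Fq : Type} [Field Fq]

lemma cond_mono {B B' : Fin 3 → Fin 3 → ℤ} (h : ∀ i j, B i j ≤ B' i j ∨ B i j < 0)
    (M : Matrix (Fin 3) (Fin 3) (Polynomial Fq)) (hM : Cond B M) : Cond B' M := by
  intro i j m hm
  have hm' : B' i j < (m:ℤ) := hm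
  rcases h i j with h' | h'
  · exact hM i j m (by omega)
  · exact hM i j m (by omega)

lemma cond_inter {B B' : Fin 3 → Fin 3 → ℤ} :
    {γ : GL (Fin 3) (Polynomial Fq) | Cond B (γ : Matrix (Fin 3) (Fin 3) (Polynomial Fq))} ∩
      {γ : GL (Fin 3) (Polynomial Fq) | Cond B' (γ : Matrix (Fin 3) (Fin 3) (Polynomial Fq))} =
    {γ : GL (Fin 3) (Polynomial Fq) |
      Cond (fun i j => min (B i j) (B' i j)) (γ : Matrix (Fin 3) (Fin 3) (Polynomial Fq))} := by
  ext γ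
  simp only [Set.mem_inter_iff, Set.mem_setOf_eq]
  constructor
  · rintro ⟨h1, h2⟩ i j m hm
    have hm' : min (B i j) (B' i j) < (m:ℤ) := hm
    rcases lt_or_ge (B i j) ((m:ℤ)) with h | h
    · exact h1 i j m h
    · exact h2 i j m (by omega)
  · intro h
    exact ⟨fun i j m hm => h i j m (by show min _ _ < _; omega),
      fun i j m hm => h i j m (by show min _ _ < _; omega)⟩

end EdgeAux

open Matrix Polynomial in
/-- for `d = 3` and `n₁ > n₂ ≥ 1`:
(a) `S_{(n₁,n₂,0)} ⊆ S_{(n₁+1,n₂,0)}` with index `q²` (edge of type 8);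
(b) if `n₁ > n₂ + 1`, then `|S_{(n₁,n₂,0)} ∩ S_{(n₁,n₂+1,0)}| = (q-1)³q^{2n₁+2}` and this
intersection has index `q` in each of the two stabilizers (edge of type 11). -/
theorem edge_stabilizers_dim_three (Fq : Type) [Field Fq] [Fintype Fq]
    (q : ℕ) (hq : q = Fintype.card Fq)
    (n₁ n₂ : ℕ) (h₂ : 1 ≤ n₂) (h₁ : n₂ < n₁) :
    (Stab Fq (![(n₁ : ℤ), (n₂ : ℤ), 0] : Fin 3 → ℤ) ⊆
        Stab Fq (![(n₁ : ℤ) + 1, (n₂ : ℤ), 0] : Fin 3 → ℤ) ∧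
      Nat.card (Stab Fq (![(n₁ : ℤ) + 1, (n₂ : ℤ), 0] : Fin 3 → ℤ)) =
        q ^ 2 * Nat.card (Stab Fq (![(n₁ : ℤ), (n₂ : ℤ), 0] : Fin 3 → ℤ))) ∧
    (n₂ + 1 < n₁ →
      Nat.card ↥(Stab Fq (![(n₁ : ℤ), (n₂ : ℤ), 0] : Fin 3 → ℤ) ∩
          Stab Fq (![(n₁ : ℤ), (n₂ : ℤ) + 1, 0] : Fin 3 → ℤ)) =
        (q - 1) ^ 3 * q ^ (2 * n₁ + 2) ∧
      q * Nat.card ↥(Stab Fq (![(n₁ : ℤ), (n₂ : ℤ), 0] : Fin 3 → ℤ) ∩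
          Stab Fq (![(n₁ : ℤ), (n₂ : ℤ) + 1, 0] : Fin 3 → ℤ)) =
        Nat.card (Stab Fq (![(n₁ : ℤ), (n₂ : ℤ), 0] : Fin 3 → ℤ)) ∧
      q * Nat.card ↥(Stab Fq (![(n₁ : ℤ), (n₂ : ℤ), 0] : Fin 3 → ℤ) ∩
          Stab Fq (![(n₁ : ℤ), (n₂ : ℤ) + 1, 0] : Fin 3 → ℤ)) =
        Nat.card (Stab Fq (![(n₁ : ℤ), (n₂ : ℤ) + 1, 0] : Fin 3 → ℤ))) := by
  subst hq
  set c := Fintype.card Fq with hc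
  have entry : ∀ (a b d : ℤ), (![a, b, d] : Fin 3 → ℤ) 0 = a ∧ (![a, b, d]) 1 = b ∧
      (![a, b, d]) 2 = d := by
    intro a b d
    refine ⟨rfl, rfl, rfl⟩
  -- cardinality of a single stabilizer
  have hcards : ∀ (n : Fin 3 → ℤ) (b01 b02 b12 : ℕ),
      n 0 - n 1 = (b01 : ℤ) → n 0 - n 2 = (b02 : ℤ) → n 1 - n 2 = (b12 : ℤ) →
      n 1 - n 0 < 0 → n 2 - n 0 < 0 → n 2 - n 1 < 0 →
      Nat.card (Stab Fq n) = (c - 1)^3 * c^(b01 + b02 + b12 + 3) := by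
    intro n b01 b02 b12 e1 e2 e3 l1 l2 l3
    rw [EdgeAux.stab_eq]
    exact EdgeAux.card_cond b01 b02 b12 (fun i j => n i - n j)
      (by show n 0 - n 0 = 0; omega) (by show n 1 - n 1 = 0; omega)
      (by show n 2 - n 2 = 0; omega) e1 e2 e3 l1 l2 l3
  have ha : Nat.card (Stab Fq (![(n₁ : ℤ), (n₂ : ℤ), 0] : Fin 3 → ℤ)) =
      (c - 1)^3 * c^(2 * n₁ + 3) := by
    rw [hcards _ (n₁ - n₂) n₁ n₂ (by show (n₁:ℤ) - n₂ = _; omega) (by show (n₁:ℤ) - 0 = _; omega)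
      (by show (n₂:ℤ) - 0 = _; omega) (by show (n₂:ℤ) - n₁ < 0; omega)
      (by show (0:ℤ) - n₁ < 0; omega) (by show (0:ℤ) - n₂ < 0; omega)]
    rw [show n₁ - n₂ + n₁ + n₂ + 3 = 2 * n₁ + 3 by omega]
  have hb : Nat.card (Stab Fq (![(n₁ : ℤ) + 1, (n₂ : ℤ), 0] : Fin 3 → ℤ)) =
      (c - 1)^3 * c^(2 * n₁ + 5) := by
    rw [hcards _ (n₁ + 1 - n₂) (n₁ + 1) n₂ (by show (n₁:ℤ) + 1 - n₂ = _; omega)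
      (by show (n₁:ℤ) + 1 - 0 = _; omega) (by show (n₂:ℤ) - 0 = _; omega)
      (by show (n₂:ℤ) - ((n₁:ℤ)+1) < 0; omega) (by show (0:ℤ) - ((n₁:ℤ)+1) < 0; omega)
      (by show (0:ℤ) - n₂ < 0; omega)]
    rw [show n₁ + 1 - n₂ + (n₁ + 1) + n₂ + 3 = 2 * n₁ + 5 by omega]
  refine ⟨⟨?_, ?_⟩, fun hn => ?_⟩
  · -- inclusion
    rw [EdgeAux.stab_eq, EdgeAux.stab_eq]
    intro γ hγ
    refine EdgeAux.cond_mono (fun i j => ?_) _ hγ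
    fin_cases i <;> fin_cases j <;>
      simp only [Matrix.cons_val_zero, Matrix.cons_val_one, Matrix.head_cons,
        Matrix.cons_val_two, Matrix.tail_cons, Fin.mk_zero, Fin.mk_one, Fin.reduceFinMk,
        Fin.isValue] <;> omega
  · rw [ha, hb, show 2*n₁+5 = 2*n₁+3+2 by omega, _root_.pow_add]
    ring
  · have hcc : Nat.card (Stab Fq (![(n₁ : ℤ), (n₂ : ℤ) + 1, 0] : Fin 3 → ℤ)) =
        (c - 1)^3 * c^(2 * n₁ + 3) := by
      rw [hcards _ (n₁ - (n₂ + 1)) n₁ (n₂ + 1) (by show (n₁:ℤ) - ((n₂:ℤ)+1) = _; push_cast; omega)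
        (by show (n₁:ℤ) - 0 = _; omega) (by show (n₂:ℤ) + 1 - 0 = _; push_cast; omega)
        (by show (n₂:ℤ) + 1 - n₁ < 0; omega) (by show (0:ℤ) - n₁ < 0; omega)
        (by show (0:ℤ) - ((n₂:ℤ) + 1) < 0; omega)]
      rw [show n₁ - (n₂ + 1) + n₁ + (n₂ + 1) + 3 = 2 * n₁ + 3 by omega]
    have hint : Nat.card ↥(Stab Fq (![(n₁ : ℤ), (n₂ : ℤ), 0] : Fin 3 → ℤ) ∩
        Stab Fq (![(n₁ : ℤ), (n₂ : ℤ) + 1, 0] : Fin 3 → ℤ)) =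
        (c - 1)^3 * c^(2 * n₁ + 2) := by
      rw [EdgeAux.stab_eq, EdgeAux.stab_eq, EdgeAux.cond_inter]
      rw [EdgeAux.card_cond (n₁ - n₂ - 1) n₁ n₂ _
        (by show min ((n₁:ℤ) - n₁) _ = 0; simp)
        (by show min ((n₂:ℤ) - n₂) (((n₂:ℤ)+1) - ((n₂:ℤ)+1)) = 0; simp)
        (by show min ((0:ℤ) - 0) ((0:ℤ) - 0) = 0; simp)
        (by show min ((n₁:ℤ) - n₂) ((n₁:ℤ) - ((n₂:ℤ)+1)) = ((n₁ - n₂ - 1 : ℕ) : ℤ); omega)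
        (by show min ((n₁:ℤ) - 0) ((n₁:ℤ) - 0) = ((n₁ : ℕ) : ℤ); omega)
        (by show min ((n₂:ℤ) - 0) (((n₂:ℤ)+1) - 0) = ((n₂ : ℕ) : ℤ); omega)
        (by show min ((n₂:ℤ) - n₁) (((n₂:ℤ)+1) - n₁) < 0; omega)
        (by show min ((0:ℤ) - n₁) ((0:ℤ) - n₁) < 0; omega)
        (by show min ((0:ℤ) - n₂) ((0:ℤ) - ((n₂:ℤ)+1)) < 0; omega)]
      rw [show n₁ - n₂ - 1 + n₁ + n₂ + 3 = 2 * n₁ + 2 by omega]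
    refine ⟨hint, ?_, ?_⟩
    · rw [hint, ha, show 2*n₁+3 = 2*n₁+2+1 by omega, _root_.pow_add]
      ring
    · rw [hint, hcc, show 2*n₁+3 = 2*n₁+2+1 by omega, _root_.pow_add]
      ring
end

section
/- For every pair of complex numbers $(\lambda_1, \lambda_2) \in \mathbb{C}^2$ there exists a function $f : T_3 \to \mathbb{C}$ with $f(0,0) = 1$ such that $A_1 f = \lambda_1 f$ and $A_2 f = \lambda_2 f$. Hence the simultaneous spectrum of the Hecke operators $A_1, A_2$ acting on the unrestricted function space $\mathbb{C}^{T_3}$ is all of $\mathbb{C}^2$. -/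
noncomputable section

/-- The Hecke operator `A₁` on functions on (an extension to `ℤ × ℤ` of) the fundamental
domain `T₃ = {(n₁,n₂) : n₁ ≥ n₂ ≥ 0}` of the Bruhat–Tits building of
`PGL₃(𝔽_q((1/t)))` modulo the non-uniform lattice `PGL₃(𝔽_q[t])`. -/
def heckeA1 (q : ℕ) (f : ℤ × ℤ → ℂ) : ℤ × ℤ → ℂ := fun p =>
  if p.1 = 0 ∧ p.2 = 0 then ((q : ℂ) ^ 2 + q + 1) * f (1, 0)
  else if p.2 = 0 then f (p.1 + 1, 0) + (q : ℂ) * ((q : ℂ) + 1) * f (p.1, 1)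
  else if p.1 = p.2 then
    ((q : ℂ) + 1) * f (p.1 + 1, p.1) + (q : ℂ) ^ 2 * f (p.1 - 1, p.1 - 1)
  else f (p.1 + 1, p.2) + (q : ℂ) * f (p.1, p.2 + 1) + (q : ℂ) ^ 2 * f (p.1 - 1, p.2 - 1)

/-- The Hecke operator `A₂` on functions on (an extension to `ℤ × ℤ` of) the fundamental
domain `T₃`. -/
def heckeA2 (q : ℕ) (f : ℤ × ℤ → ℂ) : ℤ × ℤ → ℂ := fun p =>
  if p.1 = 0 ∧ p.2 = 0 then ((q : ℂ) ^ 2 + q + 1) * f (1, 1)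
  else if p.2 = 0 then ((q : ℂ) + 1) * f (p.1 + 1, 1) + (q : ℂ) ^ 2 * f (p.1 - 1, 0)
  else if p.1 = p.2 then
    (q : ℂ) * ((q : ℂ) + 1) * f (p.1, p.1 - 1) + f (p.1 + 1, p.1 + 1)
  else f (p.1 + 1, p.2 + 1) + (q : ℂ) * f (p.1, p.2 - 1) + (q : ℂ) ^ 2 * f (p.1 - 1, p.2)

end

noncomputable section Aux

/-- The recursively defined eigenfunction on ℕ × ℕ. -/
def F (q : ℕ) (l1 l2 : ℂ) : ℕ → ℕ → ℂ
  | 0, _ => 1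
  | 1, 0 => l1 / ((q:ℂ)^2 + q + 1)
  | 1, _+1 => l2 / ((q:ℂ)^2 + q + 1)
  | a+2, 0 => l1 * F q l1 l2 (a+1) 0 - (q:ℂ) * ((q:ℂ)+1) * F q l1 l2 (a+1) 1
  | a+2, b+1 =>
      if a + 1 = b then
        l2 * F q l1 l2 (a+1) (a+1) - (q:ℂ) * ((q:ℂ)+1) * F q l1 l2 (a+1) a
      else if a = b then
        (l1 * F q l1 l2 (a+1) (a+1) - (q:ℂ)^2 * F q l1 l2 a a) / ((q:ℂ) + 1)
      else
        l1 * F q l1 l2 (a+1) (b+1) - (q:ℂ) * F q l1 l2 (a+1) (b+2) - (q:ℂ)^2 * F q l1 l2 a b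

/-- Extension of `F` to ℤ × ℤ. -/
def fsol (q : ℕ) (l1 l2 : ℂ) : ℤ × ℤ → ℂ := fun p => F q l1 l2 p.1.toNat p.2.toNat

variable (q : ℕ) (l1 l2 : ℂ)

theorem fsol_eq (a b : ℕ) : fsol q l1 l2 ((a:ℤ), (b:ℤ)) = F q l1 l2 a b := by
  simp [fsol]

/- ### value lemmas for the Hecke operators -/

theorem hA1_orig (u : ℤ × ℤ → ℂ) : heckeA1 q u (0,0) = ((q:ℂ)^2+q+1) * u (1,0) := by
  simp [heckeA1]
theorem hA1_row (u : ℤ × ℤ → ℂ) (n : ℤ) (hn : n ≠ 0) :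
    heckeA1 q u (n,0) = u (n+1,0) + (q:ℂ)*((q:ℂ)+1) * u (n,1) := by simp [heckeA1, hn]
theorem hA1_diag (u : ℤ × ℤ → ℂ) (n : ℤ) (hn : n ≠ 0) :
    heckeA1 q u (n,n) = ((q:ℂ)+1) * u (n+1,n) + (q:ℂ)^2 * u (n-1,n-1) := by
  simp [heckeA1, hn]
theorem hA1_mid (u : ℤ × ℤ → ℂ) (n1 n2 : ℤ) (h2 : n2 ≠ 0) (h3 : n1 ≠ n2) :
    heckeA1 q u (n1,n2) = u (n1+1,n2) + (q:ℂ) * u (n1,n2+1) + (q:ℂ)^2 * u (n1-1,n2-1) := by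
  simp [heckeA1, h2, h3]

theorem hA2_orig (u : ℤ × ℤ → ℂ) : heckeA2 q u (0,0) = ((q:ℂ)^2+q+1) * u (1,1) := by
  simp [heckeA2]
theorem hA2_row (u : ℤ × ℤ → ℂ) (n : ℤ) (hn : n ≠ 0) :
    heckeA2 q u (n,0) = ((q:ℂ)+1) * u (n+1,1) + (q:ℂ)^2 * u (n-1,0) := by simp [heckeA2, hn]
theorem hA2_diag (u : ℤ × ℤ → ℂ) (n : ℤ) (hn : n ≠ 0) :
    heckeA2 q u (n,n) = (q:ℂ)*((q:ℂ)+1) * u (n,n-1) + u (n+1,n+1) := by simp [heckeA2, hn]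
theorem hA2_mid (u : ℤ × ℤ → ℂ) (n1 n2 : ℤ) (h2 : n2 ≠ 0) (h3 : n1 ≠ n2) :
    heckeA2 q u (n1,n2) = u (n1+1,n2+1) + (q:ℂ) * u (n1,n2-1) + (q:ℂ)^2 * u (n1-1,n2) := by
  simp [heckeA2, h2, h3]

/- ### recurrence lemmas for fsol at integer points -/

theorem c00 : fsol q l1 l2 (0,0) = 1 := by
  have := fsol_eq q l1 l2 0 0
  simpa [F] using this

theorem c10 : fsol q l1 l2 (1,0) = l1 / ((q:ℂ)^2 + q + 1) := by
  have := fsol_eq q l1 l2 1 0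
  simpa [F] using this

theorem c11 : fsol q l1 l2 (1,1) = l2 / ((q:ℂ)^2 + q + 1) := by
  have := fsol_eq q l1 l2 1 1
  simpa [F] using this

theorem c_row (n : ℤ) (h : 1 ≤ n) :
    fsol q l1 l2 (n+1, 0) = l1 * fsol q l1 l2 (n,0)
      - (q:ℂ)*((q:ℂ)+1) * fsol q l1 l2 (n,1) := by
  lift n to ℕ using (by omega) with a
  obtain ⟨A, rfl⟩ : ∃ A, a = A + 1 := ⟨a-1, by omega⟩
  rw [show ((A+1:ℕ):ℤ) + 1 = ((A+2:ℕ):ℤ) by push_cast; ring,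
    show (0:ℤ) = ((0:ℕ):ℤ) by simp, show (1:ℤ) = ((1:ℕ):ℤ) by simp]
  rw [fsol_eq, fsol_eq, fsol_eq]
  simp [F]

theorem c_sub (n : ℤ) (h : 1 ≤ n) :
    fsol q l1 l2 (n+1, n) = (l1 * fsol q l1 l2 (n,n)
      - (q:ℂ)^2 * fsol q l1 l2 (n-1,n-1)) / ((q:ℂ)+1) := by
  lift n to ℕ using (by omega) with a
  obtain ⟨A, rfl⟩ : ∃ A, a = A + 1 := ⟨a-1, by omega⟩
  rw [show ((A+1:ℕ):ℤ) + 1 = ((A+2:ℕ):ℤ) by push_cast; ring,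
    show ((A+1:ℕ):ℤ) - 1 = ((A:ℕ):ℤ) by push_cast; ring]
  rw [fsol_eq, fsol_eq, fsol_eq]
  simp [F]

theorem c_mid (n1 n2 : ℤ) (h2 : 1 ≤ n2) (h3 : n2 < n1) :
    fsol q l1 l2 (n1+1, n2) = l1 * fsol q l1 l2 (n1,n2)
      - (q:ℂ) * fsol q l1 l2 (n1,n2+1) - (q:ℂ)^2 * fsol q l1 l2 (n1-1,n2-1) := by
  lift n2 to ℕ using (by omega) with b
  lift n1 to ℕ using (by omega) with a
  obtain ⟨B, rfl⟩ : ∃ B, b = B + 1 := ⟨b-1, by omega⟩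
  obtain ⟨A, rfl⟩ : ∃ A, a = A + 2 := ⟨a-2, by omega⟩
  have hBA : B < A + 1 := by omega
  rw [show ((A+2:ℕ):ℤ) + 1 = ((A+3:ℕ):ℤ) by push_cast; ring,
    show ((A+2:ℕ):ℤ) - 1 = ((A+1:ℕ):ℤ) by push_cast; ring,
    show ((B+1:ℕ):ℤ) + 1 = ((B+2:ℕ):ℤ) by push_cast; ring,
    show ((B+1:ℕ):ℤ) - 1 = ((B:ℕ):ℤ) by push_cast; ring]
  rw [fsol_eq, fsol_eq, fsol_eq, fsol_eq]
  have h1 : ¬ (A + 1 + 1 = B) := by omega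
  have h2' : ¬ (A + 1 = B) := by omega
  show F q l1 l2 (A+1+2) (B+1) = _
  rw [F]
  simp [h1, h2']

theorem c_diag (n : ℤ) (h : 1 ≤ n) :
    fsol q l1 l2 (n+1,n+1) = l2 * fsol q l1 l2 (n,n)
      - (q:ℂ)*((q:ℂ)+1) * fsol q l1 l2 (n,n-1) := by
  lift n to ℕ using (by omega) with a
  obtain ⟨A, rfl⟩ : ∃ A, a = A + 1 := ⟨a-1, by omega⟩
  rw [show ((A+1:ℕ):ℤ) + 1 = ((A+2:ℕ):ℤ) by push_cast; ring,
    show ((A+1:ℕ):ℤ) - 1 = ((A:ℕ):ℤ) by push_cast; ring]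
  rw [fsol_eq, fsol_eq, fsol_eq]
  show F q l1 l2 (A+2) (A+1+1) = _
  rw [F]
  simp


/- ### nonvanishing of cast denominators -/

theorem qne1 : ((q:ℂ)+1) ≠ 0 := by
  have h : ((q:ℂ)+1) = ((q+1:ℕ):ℂ) := by push_cast; ring
  rw [h]
  exact_mod_cast Nat.succ_ne_zero q

theorem qne2 : ((q:ℂ)^2+(q:ℂ)+1) ≠ 0 := by
  have h : ((q:ℂ)^2+(q:ℂ)+1) = ((q^2+q+1:ℕ):ℂ) := by push_cast; ring
  rw [h]
  exact Nat.cast_ne_zero.mpr (by positivity)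

/- ### the A₁ eigen-equation holds everywhere on T₃ by construction -/

theorem E1 (n1 n2 : ℤ) (h1 : n2 ≤ n1) (h2 : 0 ≤ n2) :
    heckeA1 q (fsol q l1 l2) (n1, n2) = l1 * fsol q l1 l2 (n1, n2) := by
  by_cases e2 : n2 = 0
  · subst e2
    by_cases e1 : n1 = 0
    · subst e1
      rw [hA1_orig, c10, c00]
      field_simp [qne2 q]
      exact mul_div_cancel_left₀ l1 (by have := qne2 q; ring_nf at this ⊢; exact this)
    · rw [hA1_row q _ n1 e1, c_row q l1 l2 n1 (by omega)]
      ring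
  · by_cases ed : n1 = n2
    · subst ed
      rw [hA1_diag q _ n1 e2, c_sub q l1 l2 n1 (by omega)]
      field_simp [qne1 q]
      ring
    · rw [hA1_mid q _ n1 n2 e2 ed, c_mid q l1 l2 n1 n2 (by omega) (by omega)]
      ring

/- ### the A₂ eigen-equation on the diagonal, by construction -/

theorem E2diag (n : ℤ) (h : 0 ≤ n) :
    heckeA2 q (fsol q l1 l2) (n,n) = l2 * fsol q l1 l2 (n,n) := by
  by_cases e : n = 0
  · subst e
    rw [hA2_orig, c11, c00]
    field_simp [qne2 q]
    exact mul_div_cancel_left₀ l2 (by have := qne2 q; ring_nf at this ⊢; exact this)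
  · rw [hA2_diag q _ n e, c_diag q l1 l2 n (by omega)]
    ring

/- ### linearity and locality of the Hecke operators -/

theorem hA1_comb (c : ℂ) (u v : ℤ × ℤ → ℂ) (p : ℤ × ℤ) :
    heckeA1 q (fun x => u x - c * v x) p = heckeA1 q u p - c * heckeA1 q v p := by
  unfold heckeA1
  dsimp only
  split_ifs <;> ring

theorem hA2_smul (c : ℂ) (u : ℤ × ℤ → ℂ) (p : ℤ × ℤ) :
    heckeA2 q (fun x => c * u x) p = c * heckeA2 q u p := by
  unfold heckeA2
  dsimp only
  split_ifs <;> ring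

theorem hA2_congr (u v : ℤ × ℤ → ℂ)
    (h : ∀ m1 m2 : ℤ, m2 ≤ m1 → 0 ≤ m2 → u (m1,m2) = v (m1,m2))
    (n1 n2 : ℤ) (h1 : n2 ≤ n1) (h2 : 0 ≤ n2) :
    heckeA2 q u (n1,n2) = heckeA2 q v (n1,n2) := by
  unfold heckeA2
  dsimp only
  split_ifs with c1 c2 c3
  · rw [h 1 1 le_rfl (by norm_num)]
  · rw [h (n1+1) 1 (by omega) (by norm_num), h (n1-1) 0 (by omega) le_rfl]
  · rw [h (n1+1) (n1+1) le_rfl (by omega), h n1 (n1-1) (by omega) (by omega)]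
  · rw [h (n1+1) (n2+1) (by omega) (by omega), h n1 (n2-1) (by omega) (by omega),
      h (n1-1) n2 (by omega) (by omega)]

/- ### the two Hecke operators commute on T₃ -/

theorem commT3 (u : ℤ × ℤ → ℂ) (n1 n2 : ℤ) (h1 : n2 ≤ n1) (h2 : 0 ≤ n2) :
    heckeA1 q (heckeA2 q u) (n1,n2) = heckeA2 q (heckeA1 q u) (n1,n2) := by
  by_cases e2 : n2 = 0
  · subst e2
    by_cases e0 : n1 = 0
    · subst e0
      norm_num [heckeA1, heckeA2]
    · by_cases e1 : n1 = 1
      · subst e1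
        norm_num [heckeA1, heckeA2]
        ring
      · rw [hA1_row q _ n1 e0, hA2_row q _ n1 e0,
          hA2_row q u (n1+1) (by omega), hA2_mid q u n1 1 one_ne_zero (by omega),
          hA1_mid q u (n1+1) 1 one_ne_zero (by omega), hA1_row q u (n1-1) (by omega)]
        norm_num
        ring_nf
  · by_cases ed : n1 = n2
    · subst ed
      by_cases e1 : n1 = 1
      · subst e1
        norm_num [heckeA1, heckeA2]
        ring
      · rw [hA1_diag q _ n1 e2, hA2_diag q _ n1 e2,
          hA2_mid q u (n1+1) n1 e2 (by omega), hA2_diag q u (n1-1) (by omega),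
          hA1_mid q u n1 (n1-1) (by omega) (by omega), hA1_diag q u (n1+1) (by omega)]
        ring_nf
    · by_cases es : n1 = n2 + 1
      · subst es
        by_cases e1 : n2 = 1
        · subst e1
          norm_num [heckeA1, heckeA2]
          ring
        · rw [hA1_mid q _ (n2+1) n2 e2 (by omega), hA2_mid q _ (n2+1) n2 e2 (by omega),
            show n2+1-1 = n2 from by ring,
            hA2_mid q u (n2+1+1) n2 e2 (by omega), hA2_diag q u (n2+1) (by omega),
            hA2_mid q u n2 (n2-1) (by omega) (by omega),
            hA1_mid q u (n2+1+1) (n2+1) (by omega) (by omega),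
            hA1_mid q u (n2+1) (n2-1) (by omega) (by omega),
            hA1_diag q u n2 e2]
          ring_nf
      · by_cases e1 : n2 = 1
        · subst e1
          rw [hA1_mid q _ n1 1 one_ne_zero (by omega), hA2_mid q _ n1 1 one_ne_zero (by omega),
            show (1:ℤ)-1 = 0 from by norm_num,
            hA2_mid q u (n1+1) 1 one_ne_zero (by omega),
            hA2_mid q u n1 (1+1) (by norm_num) (by omega),
            hA2_row q u (n1-1) (by omega),
            hA1_mid q u (n1+1) (1+1) (by norm_num) (by omega),
            hA1_row q u n1 (by omega),
            hA1_mid q u (n1-1) 1 one_ne_zero (by omega)]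
          norm_num
          ring_nf
        · rw [hA1_mid q _ n1 n2 e2 ed, hA2_mid q _ n1 n2 e2 ed,
            hA2_mid q u (n1+1) n2 e2 (by omega), hA2_mid q u n1 (n2+1) (by omega) (by omega),
            hA2_mid q u (n1-1) (n2-1) (by omega) (by omega),
            hA1_mid q u (n1+1) (n2+1) (by omega) (by omega),
            hA1_mid q u n1 (n2-1) (by omega) (by omega),
            hA1_mid q u (n1-1) n2 e2 (by omega)]
          ring_nf

/- ### the defect function g = A₂ f - λ₂ f -/

def gg (q : ℕ) (l1 l2 : ℂ) : ℤ × ℤ → ℂ :=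
  fun p => heckeA2 q (fsol q l1 l2) p - l2 * fsol q l1 l2 p

theorem gg_diag (n : ℤ) (h : 0 ≤ n) : gg q l1 l2 (n,n) = 0 := by
  unfold gg
  rw [E2diag q l1 l2 n h]
  ring

theorem gg_eigen (n1 n2 : ℤ) (h1 : n2 ≤ n1) (h2 : 0 ≤ n2) :
    heckeA1 q (gg q l1 l2) (n1,n2) = l1 * gg q l1 l2 (n1,n2) := by
  have step1 : heckeA1 q (gg q l1 l2) (n1,n2)
      = heckeA1 q (heckeA2 q (fsol q l1 l2)) (n1,n2)
        - l2 * heckeA1 q (fsol q l1 l2) (n1,n2) :=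
    hA1_comb q l2 _ _ _
  rw [step1, commT3 q (fsol q l1 l2) n1 n2 h1 h2, E1 q l1 l2 n1 n2 h1 h2]
  rw [hA2_congr q (heckeA1 q (fsol q l1 l2)) (fun x => l1 * fsol q l1 l2 x)
      (fun m1 m2 hm1 hm2 => E1 q l1 l2 m1 m2 hm1 hm2) n1 n2 h1 h2]
  rw [hA2_smul]
  unfold gg
  ring

theorem gg_zero : ∀ (a : ℕ) (m1 m2 : ℤ), m2 ≤ m1 → 0 ≤ m2 → m1 = a →
    gg q l1 l2 (m1,m2) = 0 := by
  intro a
  induction a using Nat.strong_induction_on with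
  | _ a IH =>
    intro m1 m2 h1 h2 hma
    rcases eq_or_lt_of_le h1 with heq | hlt
    · subst heq
      exact gg_diag q l1 l2 m2 h2
    · have key := gg_eigen q l1 l2 (m1 - 1) m2 (by omega) h2
      by_cases e2 : m2 = 0
      · subst e2
        by_cases e1 : m1 = 1
        · subst e1
          rw [show (1:ℤ) - 1 = 0 by norm_num, hA1_orig,
            gg_diag q l1 l2 0 le_rfl] at key
          have hk : ((q:ℂ)^2+(q:ℂ)+1) * gg q l1 l2 (1,0) = 0 := by linear_combination key
          exact (mul_eq_zero.mp hk).resolve_left (qne2 q)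
        · rw [hA1_row q _ (m1-1) (by omega),
            show m1 - 1 + 1 = m1 by ring,
            IH (m1-1).toNat (by omega) (m1-1) 1 (by omega) (by norm_num) (by omega),
            IH (m1-1).toNat (by omega) (m1-1) 0 (by omega) le_rfl (by omega)] at key
          linear_combination key
      · by_cases es : m1 = m2 + 1
        · subst es
          rw [show m2 + 1 - 1 = m2 by ring, hA1_diag q _ m2 e2,
            gg_diag q l1 l2 (m2-1) (by omega), gg_diag q l1 l2 m2 (by omega)] at key
          have hk : ((q:ℂ)+1) * gg q l1 l2 (m2+1,m2) = 0 := by linear_combination key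
          exact (mul_eq_zero.mp hk).resolve_left (qne1 q)
        · rw [hA1_mid q _ (m1-1) m2 e2 (by omega),
            show m1 - 1 + 1 = m1 by ring,
            IH (m1-1).toNat (by omega) (m1-1) (m2+1) (by omega) (by omega) (by omega),
            IH (m1-1-1).toNat (by omega) (m1-1-1) (m2-1) (by omega) (by omega) (by omega),
            IH (m1-1).toNat (by omega) (m1-1) m2 (by omega) (by omega) (by omega)] at key
          linear_combination key

theorem E2 (n1 n2 : ℤ) (h1 : n2 ≤ n1) (h2 : 0 ≤ n2) :
    heckeA2 q (fsol q l1 l2) (n1,n2) = l2 * fsol q l1 l2 (n1,n2) := by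
  have h := gg_zero q l1 l2 n1.toNat n1 n2 h1 h2 (by omega)
  unfold gg at h
  linear_combination h

end Aux


/-- for every `(λ₁, λ₂) ∈ ℂ²` there is a simultaneous eigenvector
`f : T₃ → ℂ` of the Hecke operators with `f(0,0) = 1`, `A₁ f = λ₁ f` and `A₂ f = λ₂ f` on
`T₃`; hence the simultaneous spectrum on the unrestricted function space `ℂ^{T₃}` is all of
`ℂ²`. -/
theorem hecke_simultaneous_spectrum_full (q : ℕ) (hq : 2 ≤ q) (lam₁ lam₂ : ℂ) :
    ∃ f : ℤ × ℤ → ℂ, f (0, 0) = 1 ∧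
      ∀ p : ℤ × ℤ, p.2 ≤ p.1 → 0 ≤ p.2 →
        heckeA1 q f p = lam₁ * f p ∧ heckeA2 q f p = lam₂ * f p := by
  refine ⟨fsol q lam₁ lam₂, c00 q lam₁ lam₂, ?_⟩
  rintro ⟨n1, n2⟩ h1 h2
  exact ⟨E1 q lam₁ lam₂ n1 n2 h1 h2, E2 q lam₁ lam₂ n1 n2 h1 h2⟩
end
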